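/- Let κ₀, κ∞, θ, η ∈ ℂ and set κ = ((κ₀ + θ)² − κ∞²)/4. Let U ⊆ ℂ ∖ {0} be a nonempty open connected set and let f, g : U → ℂ be differentiable functions with f(t) ∉ {0, 1} for all t ∈ U that solve the Okamoto Hamiltonian system for P_V: f'(t) = (1/t)((f−1)²(2fg − κ₀) − f(θ(f−1) + tη)) and g'(t) = −(1/t)(g·((f−1)(3fg − g − 2κ₀ − θ) − (θf + tη)) + κ) on U. Then f is twice differentiable and satisfies the fifth Painlevé equation f'' = (1/(2f) + 1/(f−1))(f')² − f'/t + ((f−1)²/t²)(α·f + β/f) + γ·f/t + δ·f(f+1)/(f−1) on U with parameters α = κ∞²/2, β = −κ₀²/2, γ = −η(θ + 1), δ = −η²/2. -/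

import Mathlib

open Complex

set_option maxHeartbeats 1000000 in
/-- a solution `(f, g)` of the Okamoto Hamiltonian system for P_V with
parameters `κ₀, κ∞, θ, η` (with `f` omitting the values 0 and 1, on a domain avoiding 0)
yields a solution `f` of the fifth Painlevé equation with parameters
`α = κ∞²/2`, `β = −κ₀²/2`, `γ = −η(θ + 1)`, `δ = −η²/2`. -/
theorem okamoto_hamiltonian_system_gives_PV
    (κ₀ κoo θ η κ : ℂ) (hκ : κ = ((κ₀ + θ) ^ 2 - κoo ^ 2) / 4)
    (U : Set ℂ)
    (hUo : IsOpen U) (hUne : U.Nonempty) (hUc : IsPreconnected U)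
    (hU0 : ∀ t ∈ U, t ≠ 0)
    (f g : ℂ → ℂ)
    (hf01 : ∀ t ∈ U, f t ≠ 0 ∧ f t ≠ 1)
    (hf : ∀ t ∈ U, HasDerivAt f
      ((1 / t) * ((f t - 1) ^ 2 * (2 * f t * g t - κ₀)
        - f t * (θ * (f t - 1) + t * η))) t)
    (hg : ∀ t ∈ U, HasDerivAt g
      (-(1 / t) * (g t * ((f t - 1) * (3 * f t * g t - g t - 2 * κ₀ - θ)
        - (θ * f t + t * η)) + κ)) t)
    (α β γ δ : ℂ)
    (hα : α = κoo ^ 2 / 2) (hβ : β = -κ₀ ^ 2 / 2)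
    (hγ : γ = -η * (θ + 1)) (hδ : δ = -η ^ 2 / 2) :
    ∀ t ∈ U, DifferentiableAt ℂ f t ∧ DifferentiableAt ℂ (deriv f) t ∧
      deriv (deriv f) t =
        (1 / (2 * f t) + 1 / (f t - 1)) * (deriv f t) ^ 2 - deriv f t / t
          + ((f t - 1) ^ 2 / t ^ 2) * (α * f t + β / f t)
          + γ * f t / t + δ * f t * (f t + 1) / (f t - 1) := by
  intro t ht
  have ht0 : t ≠ 0 := hU0 t ht
  obtain ⟨hf0, hf1⟩ := hf01 t ht
  have hf1' : f t - 1 ≠ 0 := sub_ne_zero.mpr hf1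
  have hfd := hf t ht
  have hgd := hg t ht
  have hQ := (((hfd.sub_const 1).pow 2).mul
      (((hfd.const_mul 2).mul hgd).sub_const κ₀)).sub
    (hfd.mul (((hfd.sub_const 1).const_mul θ).add ((hasDerivAt_id t).mul_const η)))
  have hP := (hasDerivAt_inv ht0).mul hQ
  have heq : deriv f =ᶠ[nhds t] fun s => s⁻¹ *
      ((f s - 1) ^ 2 * (2 * f s * g s - κ₀) - f s * (θ * (f s - 1) + s * η)) := by
    filter_upwards [hUo.mem_nhds ht] with s hs
    rw [(hf s hs).deriv, one_div]
  have hP2 := hP.congr_of_eventuallyEq heq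
  refine ⟨hfd.differentiableAt, hP2.differentiableAt, ?_⟩
  rw [hP2.deriv, hfd.deriv]
  have hD0 : (2 * f t * (f t - 1) * t ^ 2) ≠ 0 :=
    mul_ne_zero (mul_ne_zero (mul_ne_zero two_ne_zero hf0) hf1') (pow_ne_zero 2 ht0)
  have h1 : (1 / (2 * f t) + 1 / (f t - 1)) * (1 / t * ((f t - 1) ^ 2 * (2 * f t * g t - κ₀) - f t * (θ * (f t - 1) + t * η))) ^ 2
      = ((3 * f t - 1) * ((f t - 1) ^ 2 * (2 * f t * g t - κ₀) - f t * (θ * (f t - 1) + t * η)) ^ 2) / (2 * f t * (f t - 1) * t ^ 2) := by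
    field_simp
    first
    | ring1
    | (left; ring1)
    | (right; ring1)
  have h2 : 1 / t * ((f t - 1) ^ 2 * (2 * f t * g t - κ₀) - f t * (θ * (f t - 1) + t * η)) / t = (2 * f t * (f t - 1) * ((f t - 1) ^ 2 * (2 * f t * g t - κ₀) - f t * (θ * (f t - 1) + t * η))) / (2 * f t * (f t - 1) * t ^ 2) := by
    field_simp
  have h3 : (f t - 1) ^ 2 / t ^ 2 * (α * f t + β / f t) = (2 * (f t - 1) ^ 3 * (α * f t ^ 2 + β)) / (2 * f t * (f t - 1) * t ^ 2) := by
    field_simp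
  have h4 : γ * f t / t = (2 * γ * f t ^ 2 * (f t - 1) * t) / (2 * f t * (f t - 1) * t ^ 2) := by
    field_simp
  have h5 : δ * f t * (f t + 1) / (f t - 1) = (2 * δ * f t ^ 2 * (f t + 1) * t ^ 2) / (2 * f t * (f t - 1) * t ^ 2) := by
    field_simp
  simp only [id_eq]
  trans ((-((f t - 1) ^ 2 * (2 * f t * g t - κ₀) - f t * (θ * (f t - 1) + t * η)) + (2 * (f t - 1) * ((f t - 1) ^ 2 * (2 * f t * g t - κ₀) - f t * (θ * (f t - 1) + t * η)) * (2 * f t * g t - κ₀) + (f t - 1) ^ 2 * (2 * ((f t - 1) ^ 2 * (2 * f t * g t - κ₀) - f t * (θ * (f t - 1) + t * η)) * g t + 2 * f t * (-(g t * ((f t - 1) * (3 * f t * g t - g t - 2 * κ₀ - θ) - (θ * f t + t * η)) + κ))) - (((f t - 1) ^ 2 * (2 * f t * g t - κ₀) - f t * (θ * (f t - 1) + t * η)) * (θ * (f t - 1) + t * η) + f t * (θ * ((f t - 1) ^ 2 * (2 * f t * g t - κ₀) - f t * (θ * (f t - 1) + t * η)) + t * η)))) / t ^ 2)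
  · simp only [Pi.mul_apply, Pi.sub_apply, Pi.add_apply, Pi.pow_apply, Nat.cast_ofNat, Nat.add_one_sub_one, pow_one]
    field_simp
  · rw [h1, h2, h3, h4, h5, div_sub_div_same, ← add_div, ← add_div,
      ← add_div, div_eq_div_iff (pow_ne_zero 2 ht0) hD0, hκ, hα, hβ, hγ, hδ]
    ring
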